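/- Let G be a PCR over a PCS Σ. The following are equivalent: (1) G is non-degenerate (no element a satisfies both a ≤_G a* and a* ≤_G a); (2) every maximal G-coherent subset of Σ is a complete *-selection (i.e., for every a ∈ Σ, exactly one of a, a* belongs to it); (3) some maximal G-coherent subset of Σ is a complete *-selection. -/
import Mathlib

universe u v

structure PCS (α : Type*) where
  star : α → α
  zero : α
  star_star : ∀ a, star (star a) = a
  star_ne_self : ∀ a, star a ≠ a

variable {α : Type*}

/-- A pointed complemented relation (PCR) over the PCS `P`. -/
def IsPCR (P : PCS α) (G : Set (α × α)) : Prop :=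
  (∀ a, (P.zero, a) ∈ G) ∧ ∀ a b, (a, b) ∈ G ↔ (P.star b, P.star a) ∈ G

/-- `a ≤_G b`: the reflexive-transitive closure of the relation `G`. -/
def pcrLe (G : Set (α × α)) (a b : α) : Prop :=
  Relation.ReflTransGen (fun x y => (x, y) ∈ G) a b

/-- A set `S` is `G`-coherent if no `a, b ∈ S` satisfy `a ≤_G b*`. -/
def Coherent (P : PCS α) (G : Set (α × α)) (S : Set α) : Prop :=
  ∀ a ∈ S, ∀ b ∈ S, ¬ pcrLe G a (P.star b)

/-- Forward closure `↑S = {b | ∃ a ∈ S, a ≤_G b}`. -/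
def upClosure (G : Set (α × α)) (S : Set α) : Set α :=
  {b | ∃ a ∈ S, pcrLe G a b}

/-- Maximal `G`-coherent subsets; the members of the dual space `G°`. -/
def MaxCoherent (P : PCS α) (G : Set (α × α)) (S : Set α) : Prop :=
  Coherent P G S ∧ ∀ T, Coherent P G T → S ⊆ T → S = T

/-- `G` is non-degenerate: no `a` satisfies both `a ≤_G a*` and `a* ≤_G a`. -/
def Nondegenerate (P : PCS α) (G : Set (α × α)) : Prop :=
  ∀ a, ¬ (pcrLe G a (P.star a) ∧ pcrLe G (P.star a) a)

/-- A complete `*`-selection: exactly one of `a`, `a*` belongs to `S`, for each `a`. -/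
def CompleteSel (P : PCS α) (S : Set α) : Prop :=
  ∀ a, Xor' (a ∈ S) (P.star a ∈ S)

/-- The half-space `⟨S;G⟩ = {u ∈ G° : S ⊆ u}`. -/
def halfspace (P : PCS α) (G : Set (α × α)) (S : Set α) : Set (Set α) :=
  {u | MaxCoherent P G u ∧ S ⊆ u}

/-- Coherent projection `coh_G(T) = ↑T ∖ (↑T)*`. -/
def cohProj (P : PCS α) (G : Set (α × α)) (T : Set α) : Set α :=
  upClosure G T \ (P.star '' upClosure G T)

/-- Morphisms of PCRs. -/
def IsPCRHom {β : Type*} (P : PCS α) (Q : PCS β) (G : Set (α × α)) (H : Set (β × β))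
    (f : α → β) : Prop :=
  f P.zero = Q.zero ∧ (∀ a, f (P.star a) = Q.star (f a)) ∧
    ∀ a b, (a, b) ∈ G → pcrLe H (f a) (f b)

/-- A poc set: a PCR whose induced relation `≤_G` is antisymmetric and whose only
negligible element is `0`. -/
def IsPocSet (P : PCS α) (G : Set (α × α)) : Prop :=
  IsPCR P G ∧ (∀ a b, pcrLe G a b → pcrLe G b a → a = b) ∧
    ∀ a, pcrLe G a (P.star a) → a = P.zero

lemma pcrLe_dual {P : PCS α} {G : Set (α × α)} (hG : IsPCR P G) {a b : α}
    (h : pcrLe G a b) : pcrLe G (P.star b) (P.star a) := by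
  induction h with
  | refl => exact .refl
  | tail _ hbc ih => exact Relation.ReflTransGen.head ((hG.2 _ _).mp hbc) ih

lemma pcrLe_dual_iff {P : PCS α} {G : Set (α × α)} (hG : IsPCR P G) {a b : α} :
    pcrLe G (P.star b) (P.star a) ↔ pcrLe G a b := by
  constructor
  · intro h
    have := pcrLe_dual hG h
    rwa [P.star_star, P.star_star] at this
  · exact pcrLe_dual hG

/-- Existence of a maximal coherent set (Zorn). -/
lemma exists_maxCoherent (P : PCS α) (G : Set (α × α)) :
    ∃ S, MaxCoherent P G S := by
  obtain ⟨m, hm⟩ := zorn_subset {S | Coherent P G S} (fun c hc hchain => by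
    refine ⟨⋃₀ c, ?_, fun s hs => Set.subset_sUnion_of_mem hs⟩
    intro a ha b hb
    obtain ⟨s, hs, has⟩ := ha
    obtain ⟨t, ht, hbt⟩ := hb
    rcases hchain.total hs ht with h | h
    · exact hc ht a (h has) b hbt
    · exact hc hs a has b (h hbt))
  exact ⟨m, hm.1, fun T hT hsub => (hm.2 hT hsub).antisymm hsub ▸ rfl⟩

theorem stmt1 (P : PCS α) (G : Set (α × α)) (hG : IsPCR P G) :
    (Nondegenerate P G ↔ ∀ S, MaxCoherent P G S → CompleteSel P S) ∧
    (Nondegenerate P G ↔ ∃ S, MaxCoherent P G S ∧ CompleteSel P S) := by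
  -- (1) → (2)
  have h12 : Nondegenerate P G → ∀ S, MaxCoherent P G S → CompleteSel P S := by
    intro hnd S ⟨hcoh, hmax⟩ a
    have hnotboth : ¬ (a ∈ S ∧ P.star a ∈ S) := by
      rintro ⟨ha, ha'⟩
      exact hcoh a ha (P.star a) ha' (by rw [P.star_star]; exact .refl)
    -- show a ∈ S ∨ a* ∈ S
    have key : ∀ x : α, x ∉ S →
        pcrLe G x (P.star x) ∨ ∃ b ∈ S, pcrLe G x (P.star b) := by
      intro x hx
      have hne : S ≠ insert x S := by
        intro h; exact hx (h ▸ Set.mem_insert x S)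
      have hnc : ¬ Coherent P G (insert x S) := fun h =>
        hne (hmax _ h (Set.subset_insert x S))
      simp only [Coherent, not_forall, not_not] at hnc
      obtain ⟨u, hu, v, hv, huv⟩ := hnc
      rcases hu with rfl | hu
      · rcases hv with rfl | hv
        · exact Or.inl huv
        · exact Or.inr ⟨v, hv, huv⟩
      · rcases hv with rfl | hv
        · -- u ∈ S, pcrLe u (star x): dualize
          refine Or.inr ⟨u, hu, ?_⟩
          have := pcrLe_dual hG huv
          rwa [P.star_star] at this
        · exact absurd huv (hcoh u hu v hv)
    have hmem : a ∈ S ∨ P.star a ∈ S := by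
      by_contra h
      push_neg at h
      obtain ⟨ha, ha'⟩ := h
      rcases key a ha with h1 | ⟨b, hb, h1⟩
      · rcases key (P.star a) ha' with h2 | ⟨c, hc, h2⟩
        · rw [P.star_star] at h2
          exact hnd a ⟨h1, h2⟩
        · -- a* ≤ c*, dual: c ≤ a; also a ≤ a*, dual... : c ≤ a ≤ a* ≤ c*? need a* ≤ c*... h2 : pcrLe (star a) (star c)
          have hca : pcrLe G c a := by
            have := pcrLe_dual hG h2
            rwa [P.star_star, P.star_star] at this
          have : pcrLe G c (P.star c) :=
            hca.trans (h1.trans (pcrLe_dual hG hca))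
          exact hcoh c hc c hc this
      · rcases key (P.star a) ha' with h2 | ⟨c, hc, h2⟩
        · -- a ≤ b*, a* ≤ a (from h2 dual... h2 : star a ≤ star (star a) = a)
          rw [P.star_star] at h2
          -- b ≤ a ≤ b*? dual of h1: b ≤ star a ... pcrLe_dual h1 : star (star b) ≤ star a i.e. b ≤ star a
          have hb1 : pcrLe G b (P.star a) := by
            have := pcrLe_dual hG h1
            rwa [P.star_star] at this
          have : pcrLe G b (P.star b) := hb1.trans (h2.trans h1)
          exact hcoh b hb b hb this
        · -- a ≤ b*, a* ≤ c* : c ≤ a ≤ b*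
          have hca : pcrLe G c a := by
            have := pcrLe_dual hG h2
            rwa [P.star_star, P.star_star] at this
          exact hcoh c hc b hb (hca.trans h1)
    rcases hmem with h | h
    · exact Or.inl ⟨h, fun h' => hnotboth ⟨h, h'⟩⟩
    · exact Or.inr ⟨h, fun h' => hnotboth ⟨h', h⟩⟩
  -- (3) → (1)
  have h31 : (∃ S, MaxCoherent P G S ∧ CompleteSel P S) → Nondegenerate P G := by
    rintro ⟨S, ⟨hcoh, -⟩, hsel⟩ a ⟨h1, h2⟩
    rcases hsel a with ⟨ha, -⟩ | ⟨ha, -⟩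
    · exact hcoh a ha a ha h1
    · exact hcoh _ ha _ ha (by rwa [P.star_star])
  refine ⟨⟨h12, ?_⟩, ⟨fun hnd => ?_, h31⟩⟩
  · intro h
    obtain ⟨S, hS⟩ := exists_maxCoherent P G
    exact h31 ⟨S, hS, h S hS⟩
  · obtain ⟨S, hS⟩ := exists_maxCoherent P G
    exact ⟨S, hS, h12 hnd S hS⟩
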